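/- Invariance for the order-1 boundary Hamiltonian: define on ℝ³×ℝ³ the true Hamiltonian H_{c₁}(x,p) = H₀(x,p) + u_{c₁}(x)H₁(x,p) + η_{c₁}(x,p)g₁(x), where g₁(x) = x₁ − 1, u_{c₁}(x) = −(c₁ + c₂x₃)/c₇ and η_{c₁}(x,p) = −c₅p₃. Let z(·) = (x(·),p(·)) be a solution of the Hamiltonian system ż = X_{H_{c₁}}(z) on an interval J containing 0 with g₁(x(0)) = 0 and H₁(z(0)) = 0. Then g₁(x(t)) = 0 and H₁(z(t)) = 0 for all t ∈ J; moreover, along z(·) the trajectory solves ẋ = F₀(x) + u_{c₁}(x)F₁(x) and ṗ = −p·(F₀'(x) + u_{c₁}(x)F₁'(x)) − η_{c₁}(z)∇g₁(x), so z(·) together with the feedback control u_{c₁}∘x and multiplier η_{c₁}∘z is an extremal of the state-constrained problem lying on the boundary g₁ = 0. -/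

import Mathlib

noncomputable section

/-- Drift vector field of the electric vehicle. -/
def F0 (c1 c2 c3 c4 c5 c6 : ℝ) (x : Fin 3 → ℝ) : Fin 3 → ℝ :=
  ![c1 * x 0 + c2 * x 2, c3 * x 2, c4 + c5 * x 0 + c6 * (x 2) ^ 2]

/-- Control vector field of the electric vehicle. -/
def F1 (c7 : ℝ) (_x : Fin 3 → ℝ) : Fin 3 → ℝ := ![c7, 0, 0]

/-- The Hamiltonian vector field `X_h = (∂h/∂p, −∂h/∂x)` of a function `h`
on `ℝ³ × ℝ³` (coordinates `(x, p)`). -/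
def Xham (h : (Fin 3 → ℝ) × (Fin 3 → ℝ) → ℝ) (z : (Fin 3 → ℝ) × (Fin 3 → ℝ)) :
    (Fin 3 → ℝ) × (Fin 3 → ℝ) :=
  (fun i => fderiv ℝ h z ((0 : Fin 3 → ℝ), Pi.single i (1:ℝ)),
   fun i => -fderiv ℝ h z (Pi.single i (1:ℝ), (0 : Fin 3 → ℝ)))

/-- Hamiltonian lift `H₀(x,p) = ⟨p, F₀(x)⟩`. -/
def H0 (c1 c2 c3 c4 c5 c6 : ℝ) (z : (Fin 3 → ℝ) × (Fin 3 → ℝ)) : ℝ :=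
  ∑ i, z.2 i * F0 c1 c2 c3 c4 c5 c6 z.1 i

/-- Hamiltonian lift `H₁(x,p) = ⟨p, F₁(x)⟩ = c₇ p₁`. -/
def H1 (c7 : ℝ) (z : (Fin 3 → ℝ) × (Fin 3 → ℝ)) : ℝ := c7 * z.2 0

/-- Feedback boundary control of the order-1 constraint `g₁(x) = x₁ − 1`. -/
def uc1 (c1 c2 c7 : ℝ) (x : Fin 3 → ℝ) : ℝ := -(c1 + c2 * x 2) / c7

/-- Multiplier of the order-1 constraint. -/
def etac1 (c5 : ℝ) (z : (Fin 3 → ℝ) × (Fin 3 → ℝ)) : ℝ := -(c5 * z.2 2)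

/-- True Hamiltonian of the order-1 boundary arc:
`H_{c₁} = H₀ + u_{c₁}H₁ + η_{c₁} g₁`. -/
def Hc1 (c1 c2 c3 c4 c5 c6 c7 : ℝ) (z : (Fin 3 → ℝ) × (Fin 3 → ℝ)) : ℝ :=
  H0 c1 c2 c3 c4 c5 c6 z + uc1 c1 c2 c7 z.1 * H1 c7 z + etac1 c5 z * (z.1 0 - 1)


def Acoord (i : Fin 3) : ((Fin 3 → ℝ) × (Fin 3 → ℝ)) →L[ℝ] ℝ :=
  (ContinuousLinearMap.proj i).comp (ContinuousLinearMap.fst ℝ (Fin 3 → ℝ) (Fin 3 → ℝ))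
def Bcoord (i : Fin 3) : ((Fin 3 → ℝ) × (Fin 3 → ℝ)) →L[ℝ] ℝ :=
  (ContinuousLinearMap.proj i).comp (ContinuousLinearMap.snd ℝ (Fin 3 → ℝ) (Fin 3 → ℝ))

lemma hA (i : Fin 3) (z0 : (Fin 3 → ℝ) × (Fin 3 → ℝ)) :
    HasFDerivAt (fun z : (Fin 3 → ℝ) × (Fin 3 → ℝ) => z.1 i) (Acoord i) z0 :=
  (Acoord i).hasFDerivAt
lemma hB (i : Fin 3) (z0 : (Fin 3 → ℝ) × (Fin 3 → ℝ)) :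
    HasFDerivAt (fun z : (Fin 3 → ℝ) × (Fin 3 → ℝ) => z.2 i) (Bcoord i) z0 :=
  (Bcoord i).hasFDerivAt

lemma keyX (c1 c2 c3 c4 c5 c6 c7 : ℝ) (h7 : c7 ≠ 0) (z0 : (Fin 3 → ℝ) × (Fin 3 → ℝ)) :
    Xham (Hc1 c1 c2 c3 c4 c5 c6 c7) z0 =
      (![c1 * (z0.1 0 - 1), c3 * z0.1 2,
         c4 + c5 * z0.1 0 + c6 * z0.1 2 ^ 2 - c5 * (z0.1 0 - 1)],
       ![-(c1 * z0.2 0), 0, -(c3 * z0.2 1 + 2 * c6 * z0.1 2 * z0.2 2)]) := by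
  have hfun : Hc1 c1 c2 c3 c4 c5 c6 c7 = fun z : (Fin 3 → ℝ) × (Fin 3 → ℝ) =>
      z.2 0 * (c1 * z.1 0 + c2 * z.1 2) + z.2 1 * (c3 * z.1 2)
        + z.2 2 * (c4 + c5 * z.1 0 + c6 * (z.1 2 * z.1 2))
        + c7⁻¹ * -(c1 + c2 * z.1 2) * (c7 * z.2 0)
        + -(c5 * z.2 2) * (z.1 0 - 1) := by
    funext z
    simp [Hc1, H0, H1, F0, uc1, etac1, Fin.sum_univ_three]
    ring
  have bigterm := (((((hB 0 z0).mul (((hA 0 z0).const_mul c1).add ((hA 2 z0).const_mul c2))).add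
      ((hB 1 z0).mul ((hA 2 z0).const_mul c3))).add
      ((hB 2 z0).mul ((((hA 0 z0).const_mul c5).const_add c4).add
        (((hA 2 z0).mul (hA 2 z0)).const_mul c6)))).add
      (((((hA 2 z0).const_mul c2).const_add c1).neg.const_mul c7⁻¹).mul
        ((hB 0 z0).const_mul c7))).add
      ((((hB 2 z0).const_mul c5).neg).mul ((hA 0 z0).sub_const 1))
  rw [hfun]
  unfold Xham
  refine Prod.ext ?_ ?_ <;> funext i <;> rw [show fderiv ℝ (fun z : (Fin 3 → ℝ) × (Fin 3 → ℝ) =>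
      z.2 0 * (c1 * z.1 0 + c2 * z.1 2) + z.2 1 * (c3 * z.1 2)
        + z.2 2 * (c4 + c5 * z.1 0 + c6 * (z.1 2 * z.1 2))
        + c7⁻¹ * -(c1 + c2 * z.1 2) * (c7 * z.2 0)
        + -(c5 * z.2 2) * (z.1 0 - 1)) z0 = _ from bigterm.fderiv] <;> fin_cases i <;>
    simp only [ContinuousLinearMap.add_apply, ContinuousLinearMap.smul_apply,
      ContinuousLinearMap.neg_apply, ContinuousLinearMap.coe_comp', Function.comp_apply,
      ContinuousLinearMap.coe_fst', ContinuousLinearMap.coe_snd',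
      ContinuousLinearMap.proj_apply, Acoord, Bcoord, smul_eq_mul,
      Matrix.cons_val_zero, Matrix.cons_val_one, Matrix.head_cons,
      Matrix.cons_val_two, Matrix.tail_cons, Pi.single_eq_same,
      Pi.single_eq_of_ne (by decide : (0:Fin 3) ≠ 1), Pi.single_eq_of_ne (by decide : (0:Fin 3) ≠ 2),
      Pi.single_eq_of_ne (by decide : (1:Fin 3) ≠ 0), Pi.single_eq_of_ne (by decide : (1:Fin 3) ≠ 2),
      Pi.single_eq_of_ne (by decide : (2:Fin 3) ≠ 0), Pi.single_eq_of_ne (by decide : (2:Fin 3) ≠ 1)] <;>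
    (try simp only [Pi.single_apply, Fin.ext_iff]) <;> (try norm_num) <;> (try field_simp) <;>
    (try ring)

/-- Invariance for the order-1 boundary Hamiltonian: a solution of
`ż = X_{H_{c₁}}(z)` starting on `{g₁ = 0} ∩ {H₁ = 0}` stays there, and along it
the trajectory solves `ẋ = F₀(x) + u_{c₁}(x)F₁(x)` while `p` solves the
constrained adjoint equation with multiplier `η_{c₁}`, so it is a boundary
extremal of the state-constrained problem. -/
theorem stmt17 (c1 c2 c3 c4 c5 c6 c7 : ℝ)
    (h1 : c1 < 0) (h2 : c2 < 0) (h3 : 0 < c3) (h4 : c4 < 0)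
    (h5 : 0 < c5) (h6 : c6 < 0) (h7 : 0 < c7)
    (J : Set ℝ) (hJ : J.OrdConnected) (h0J : (0:ℝ) ∈ J)
    (z : ℝ → (Fin 3 → ℝ) × (Fin 3 → ℝ))
    (hz : ∀ t ∈ J, HasDerivWithinAt z (Xham (Hc1 c1 c2 c3 c4 c5 c6 c7) (z t)) J t)
    (hg0 : (z 0).1 0 - 1 = 0) (hH10 : H1 c7 (z 0) = 0) :
    ∀ t ∈ J,
      (z t).1 0 - 1 = 0 ∧
      H1 c7 (z t) = 0 ∧
      HasDerivWithinAt (fun s => (z s).1 0)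
        (c1 * (z t).1 0 + c2 * (z t).1 2 + uc1 c1 c2 c7 (z t).1 * c7) J t ∧
      HasDerivWithinAt (fun s => (z s).1 1) (c3 * (z t).1 2) J t ∧
      HasDerivWithinAt (fun s => (z s).1 2)
        (c4 + c5 * (z t).1 0 + c6 * ((z t).1 2) ^ 2) J t ∧
      HasDerivWithinAt (fun s => (z s).2 0)
        (-(c1 * (z t).2 0 + c5 * (z t).2 2) - etac1 c5 (z t) * 1) J t ∧
      HasDerivWithinAt (fun s => (z s).2 1) 0 J t ∧
      HasDerivWithinAt (fun s => (z s).2 2)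
        (-(c2 * (z t).2 0 + c3 * (z t).2 1 + 2 * c6 * (z t).1 2 * (z t).2 2)
          - etac1 c5 (z t) * 0) J t := by
  have hc7 : c7 ≠ 0 := ne_of_gt h7
  have hJc : Convex ℝ J := convex_iff_ordConnected.mpr hJ
  have hx : ∀ (i : Fin 3), ∀ t ∈ J, HasDerivWithinAt (fun s => (z s).1 i)
      ((Xham (Hc1 c1 c2 c3 c4 c5 c6 c7) (z t)).1 i) J t := fun i t ht =>
    (Acoord i).hasFDerivAt.comp_hasDerivWithinAt t (hz t ht)
  have hp : ∀ (i : Fin 3), ∀ t ∈ J, HasDerivWithinAt (fun s => (z s).2 i)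
      ((Xham (Hc1 c1 c2 c3 c4 c5 c6 c7) (z t)).2 i) J t := fun i t ht =>
    (Bcoord i).hasFDerivAt.comp_hasDerivWithinAt t (hz t ht)
  have hx0 : ∀ t ∈ J, HasDerivWithinAt (fun s => (z s).1 0) (c1 * ((z t).1 0 - 1)) J t := by
    intro t ht; have h := hx 0 t ht
    rw [keyX c1 c2 c3 c4 c5 c6 c7 hc7] at h; simpa using h
  have hx1 : ∀ t ∈ J, HasDerivWithinAt (fun s => (z s).1 1) (c3 * (z t).1 2) J t := by
    intro t ht; have h := hx 1 t ht
    rw [keyX c1 c2 c3 c4 c5 c6 c7 hc7] at h; simpa using h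
  have hx2 : ∀ t ∈ J, HasDerivWithinAt (fun s => (z s).1 2)
      (c4 + c5 * (z t).1 0 + c6 * (z t).1 2 ^ 2 - c5 * ((z t).1 0 - 1)) J t := by
    intro t ht; have h := hx 2 t ht
    rw [keyX c1 c2 c3 c4 c5 c6 c7 hc7] at h; simpa using h
  have hp0 : ∀ t ∈ J, HasDerivWithinAt (fun s => (z s).2 0) (-(c1 * (z t).2 0)) J t := by
    intro t ht; have h := hp 0 t ht
    rw [keyX c1 c2 c3 c4 c5 c6 c7 hc7] at h; simpa using h
  have hp1 : ∀ t ∈ J, HasDerivWithinAt (fun s => (z s).2 1) 0 J t := by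
    intro t ht; have h := hp 1 t ht
    rw [keyX c1 c2 c3 c4 c5 c6 c7 hc7] at h; simpa using h
  have hp2 : ∀ t ∈ J, HasDerivWithinAt (fun s => (z s).2 2)
      (-(c3 * (z t).2 1 + 2 * c6 * (z t).1 2 * (z t).2 2)) J t := by
    intro t ht; have h := hp 2 t ht
    rw [keyX c1 c2 c3 c4 c5 c6 c7 hc7] at h; simpa using h
  -- invariance of g₁ = 0
  have hgf : ∀ t ∈ J, HasDerivWithinAt
      (fun s => ((z s).1 0 - 1) * Real.exp (-c1 * s)) 0 J t := by
    intro t ht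
    have hgd : HasDerivWithinAt (fun s => (z s).1 0 - 1) (c1 * ((z t).1 0 - 1)) J t :=
      (hx0 t ht).sub_const 1
    have hexp : HasDerivAt (fun s : ℝ => Real.exp (-c1 * s))
        (Real.exp (-c1 * t) * (-c1 * 1)) t := ((hasDerivAt_id t).const_mul (-c1)).exp
    have h : HasDerivWithinAt (fun s => ((z s).1 0 - 1) * Real.exp (-c1 * s)) _ J t :=
      hgd.mul hexp.hasDerivWithinAt
    convert h using 1; ring
  have hgzero : ∀ t ∈ J, (z t).1 0 - 1 = 0 := by
    intro t ht
    have h := hJc.norm_image_sub_le_of_norm_hasDerivWithin_le (f' := fun _ => (0:ℝ)) (C := 0)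
      hgf (fun x _ => by simp) h0J ht
    have hft : ((z t).1 0 - 1) * Real.exp (-c1 * t)
        = ((z 0).1 0 - 1) * Real.exp (-c1 * 0) := by
      simpa [sub_eq_zero] using h
    rw [hg0, zero_mul] at hft
    exact (mul_eq_zero.mp hft).resolve_right (Real.exp_ne_zero _)
  -- invariance of H₁ = 0
  have hpf : ∀ t ∈ J, HasDerivWithinAt
      (fun s => (z s).2 0 * Real.exp (c1 * s)) 0 J t := by
    intro t ht
    have hexp : HasDerivAt (fun s : ℝ => Real.exp (c1 * s))
        (Real.exp (c1 * t) * (c1 * 1)) t := ((hasDerivAt_id t).const_mul c1).exp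
    have h : HasDerivWithinAt (fun s => (z s).2 0 * Real.exp (c1 * s)) _ J t :=
      (hp0 t ht).mul hexp.hasDerivWithinAt
    convert h using 1; ring
  have hp00 : (z 0).2 0 = 0 := by
    have := hH10; rw [H1] at this
    exact (mul_eq_zero.mp this).resolve_left hc7
  have hpzero : ∀ t ∈ J, (z t).2 0 = 0 := by
    intro t ht
    have h := hJc.norm_image_sub_le_of_norm_hasDerivWithin_le (f' := fun _ => (0:ℝ)) (C := 0)
      hpf (fun x _ => by simp) h0J ht
    have hft : (z t).2 0 * Real.exp (c1 * t) = (z 0).2 0 * Real.exp (c1 * 0) := by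
      simpa [sub_eq_zero] using h
    rw [hp00, zero_mul] at hft
    exact (mul_eq_zero.mp hft).resolve_right (Real.exp_ne_zero _)
  intro t ht
  have hgt := hgzero t ht
  have hpt := hpzero t ht
  refine ⟨hgt, by simp [H1, hpt], ?_, hx1 t ht, ?_, ?_, hp1 t ht, ?_⟩
  · convert hx0 t ht using 1
    rw [uc1]; field_simp; ring
  · convert hx2 t ht using 1
    rw [hgt]; ring
  · convert hp0 t ht using 1
    rw [etac1]; ring
  · convert hp2 t ht using 1
    rw [etac1, hpt]; ring
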